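/- For every integer n ≥ 1, the independence domination number of the chain triangular cactus T_n equals ⌊(n+1)/2⌋. -/

import Mathlib

/-- `S` is an independent dominating set of `G`: pairwise non-adjacent, and every
vertex outside `S` has a neighbour in `S`. -/
def IsIndepDomSet {V : Type*} (G : SimpleGraph V) (S : Finset V) : Prop :=
  (∀ v ∈ S, ∀ w ∈ S, ¬ G.Adj v w) ∧ ∀ v, v ∉ S → ∃ w ∈ S, G.Adj v w

/-- The chain triangular cactus `T n`: vertices `Sum.inl i` are `x i`
(`0 ≤ i ≤ n`) and `Sum.inr k` is `y (k+1)` (`0 ≤ k ≤ n-1`); the `i`-th triangle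
(`1 ≤ i ≤ n`) has vertices `x (i-1)`, `x i`, `y i`. -/
def triChain (n : ℕ) : SimpleGraph (Fin (n + 1) ⊕ Fin n) :=
  SimpleGraph.fromRel fun p q =>
    match p, q with
    | Sum.inl i, Sum.inl j => (i : ℕ) + 1 = (j : ℕ)
    | Sum.inl i, Sum.inr k => (i : ℕ) = (k : ℕ) ∨ (i : ℕ) = (k : ℕ) + 1
    | _, _ => False

/-- The number of independent dominating sets of the chain triangular cactus `T n`. -/
noncomputable def numIDSTri (n : ℕ) : ℕ :=
  Nat.card {S : Finset (Fin (n + 1) ⊕ Fin n) // IsIndepDomSet (triChain n) S}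

/-- The independence domination number of a graph: the minimum cardinality of an
independent dominating set. -/
noncomputable def indepDomNum {V : Type*} (G : SimpleGraph V) : ℕ :=
  sInf {k | ∃ S : Finset V, IsIndepDomSet G S ∧ S.card = k}

lemma triChain_adj_inl_inl {n : ℕ} (i j : Fin (n+1)) :
    (triChain n).Adj (Sum.inl i) (Sum.inl j) ↔ ((i:ℕ)+1 = j ∨ (j:ℕ)+1 = i) := by
  simp only [triChain, SimpleGraph.fromRel_adj, ne_eq, Sum.inl.injEq]
  constructor
  · rintro ⟨h, h2⟩; exact h2
  · rintro (h | h) <;> exact ⟨fun he => by subst he; omega, by tauto⟩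

lemma triChain_adj_inl_inr {n : ℕ} (i : Fin (n+1)) (k : Fin n) :
    (triChain n).Adj (Sum.inl i) (Sum.inr k) ↔ ((i:ℕ) = k ∨ (i:ℕ) = k+1) := by
  simp only [triChain, SimpleGraph.fromRel_adj]
  constructor
  · rintro ⟨h, h2 | h2⟩
    · exact h2
    · exact h2.elim
  · intro h; exact ⟨by simp, Or.inl h⟩

lemma triChain_not_adj_inr_inr {n : ℕ} (k m : Fin n) :
    ¬ (triChain n).Adj (Sum.inr k) (Sum.inr m) := by
  simp [triChain, SimpleGraph.fromRel_adj]

lemma triChain_lower {n : ℕ} (S : Finset (Fin (n+1) ⊕ Fin n))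
    (h : IsIndepDomSet (triChain n) S) : (n + 1) / 2 ≤ S.card := by
  have hex : ∀ k : Fin n, ∃ v ∈ S,
      v = Sum.inl k.castSucc ∨ v = Sum.inl k.succ ∨ v = Sum.inr k := by
    intro k
    by_cases hk : Sum.inr k ∈ S
    · exact ⟨Sum.inr k, hk, Or.inr (Or.inr rfl)⟩
    · obtain ⟨w, hwS, hadj⟩ := h.2 (Sum.inr k) hk
      match w with
      | Sum.inl i =>
        rw [(triChain n).adj_comm, triChain_adj_inl_inr] at hadj
        refine ⟨Sum.inl i, hwS, ?_⟩
        rcases hadj with h1 | h1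
        · exact Or.inl (by congr 1; exact Fin.ext (by simpa using h1))
        · exact Or.inr (Or.inl (by congr 1; exact Fin.ext (by simpa using h1)))
      | Sum.inr m => exact absurd hadj (by rw [(triChain n).adj_comm]; exact triChain_not_adj_inr_inr _ _)
  choose f hfS hft using hex
  have key : n ≤ 2 * S.card := by
    have h1 : (Finset.univ : Finset (Fin n)).card ≤ 2 * (Finset.univ.image f).card := by
      apply Finset.card_le_mul_card_image
      intro v hv
      set c : ℕ := (match v with | Sum.inl i => (i:ℕ) - 1 | Sum.inr m => (m:ℕ)) with hc
      calc (Finset.univ.filter fun k => f k = v).card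
          ≤ ({c, c+1} : Finset ℕ).card := by
            apply Finset.card_le_card_of_injOn Fin.val
            · intro k hk
              simp only [Finset.mem_coe, Finset.mem_filter] at hk ⊢
              have := hft k
              rw [hk.2] at this
              match v with
              | Sum.inl i =>
                simp only [Sum.inl.injEq, reduceCtorEq, or_false] at this
                have : (i:ℕ) = (k:ℕ) ∨ (i:ℕ) = (k:ℕ)+1 := by
                  rcases this with h1 | h1 <;> [left; right] <;> subst h1 <;> simp
                simp only [hc, Finset.mem_insert, Finset.mem_singleton]
                omega
              | Sum.inr m =>
                simp only [reduceCtorEq, Sum.inr.injEq, false_or] at this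
                rw [← this]; simp [hc]
            · exact fun a _ b _ hab => Fin.ext hab
        _ ≤ 2 := Finset.card_insert_le _ _ |>.trans (by simp)
    have h2 : (Finset.univ.image f).card ≤ S.card :=
      Finset.card_le_card (fun v hv => by
        obtain ⟨k, _, rfl⟩ := Finset.mem_image.mp hv; exact hfS k)
    simpa using h1.trans (by omega)
  omega

def oddSet (n : ℕ) : Finset (Fin (n + 1) ⊕ Fin n) :=
  (Finset.univ : Finset (Fin ((n+1)/2))).image
    (fun k : Fin ((n+1)/2) => Sum.inl ⟨2*(k:ℕ)+1, by have := k.isLt; omega⟩)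

lemma mem_oddSet {n : ℕ} (v : Fin (n+1) ⊕ Fin n) :
    v ∈ oddSet n ↔ ∃ i : Fin (n+1), v = Sum.inl i ∧ (i:ℕ) % 2 = 1 := by
  simp only [oddSet, Finset.mem_image, Finset.mem_univ, true_and]
  constructor
  · rintro ⟨k, rfl⟩; exact ⟨_, rfl, show (2*(k:ℕ)+1) % 2 = 1 by omega⟩
  · rintro ⟨i, rfl, hi⟩
    have hlt := i.isLt
    exact ⟨⟨(i:ℕ)/2, by omega⟩, by congr 1; exact Fin.ext (by simp; omega)⟩

lemma card_oddSet (n : ℕ) : (oddSet n).card = (n+1)/2 := by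
  rw [oddSet, Finset.card_image_of_injective, Finset.card_univ, Fintype.card_fin]
  intro a b hab
  simp only [Sum.inl.injEq, Fin.mk.injEq] at hab
  exact Fin.ext (by omega)

lemma oddSet_isIndepDom (n : ℕ) (hn : 1 ≤ n) : IsIndepDomSet (triChain n) (oddSet n) := by
  constructor
  · intro v hv w hw hadj
    rw [mem_oddSet] at hv hw
    obtain ⟨i, rfl, hi⟩ := hv
    obtain ⟨j, rfl, hj⟩ := hw
    rw [triChain_adj_inl_inl] at hadj
    omega
  · intro v hv
    rw [mem_oddSet] at hv
    push_neg at hv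
    match v with
    | Sum.inl i =>
      have hi : (i:ℕ) % 2 = 0 := by
        by_contra hodd
        exact hv i rfl (by omega)
      have hlt := i.isLt
      by_cases hin : (i:ℕ) < n
      · refine ⟨Sum.inl ⟨(i:ℕ)+1, by omega⟩, ?_, ?_⟩
        · rw [mem_oddSet]; exact ⟨_, rfl, by simp; omega⟩
        · rw [triChain_adj_inl_inl]; simp
      · have hin' : (i:ℕ) = n := by omega
        have hn2 : 2 ≤ n := by omega
        refine ⟨Sum.inl ⟨n-1, by omega⟩, ?_, ?_⟩
        · rw [mem_oddSet]; exact ⟨_, rfl, by simp; omega⟩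
        · rw [triChain_adj_inl_inl]; right; simp; omega
    | Sum.inr m =>
      have hlt := m.isLt
      by_cases hm : (m:ℕ) % 2 = 1
      · refine ⟨Sum.inl ⟨(m:ℕ), by omega⟩, ?_, ?_⟩
        · rw [mem_oddSet]; exact ⟨_, rfl, by simpa⟩
        · rw [(triChain n).adj_comm, triChain_adj_inl_inr]; left; simp
      · refine ⟨Sum.inl ⟨(m:ℕ)+1, by omega⟩, ?_, ?_⟩
        · rw [mem_oddSet]; exact ⟨_, rfl, by simp; omega⟩
        · rw [(triChain n).adj_comm, triChain_adj_inl_inr]; right; simp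

/-- For every `n ≥ 1`, the independence domination number of the chain triangular
cactus `T n` equals `⌊(n+1)/2⌋`. -/
theorem indepDomNum_triChain (n : ℕ) (hn : 1 ≤ n) :
    indepDomNum (triChain n) = (n + 1) / 2 := by
  apply le_antisymm
  · exact Nat.sInf_le ⟨oddSet n, oddSet_isIndepDom n hn, card_oddSet n⟩
  · refine le_csInf ⟨(n+1)/2, oddSet n, oddSet_isIndepDom n hn, card_oddSet n⟩ ?_
    rintro k ⟨S, hS, rfl⟩
    exact triChain_lower S hS
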